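/- For every integer n ≥ 1: (a) 2^{n−1} · P_{2n} = Σ_{j=0}^{n} C(2n, 2j) · P_{2j}, and (b) 2^{2n−1} · P_{2n} = Σ_{j=0}^{n} C(2n, 2j) · P_{2j} · Q_{2(n−j)}. -/

import Mathlib

set_option maxHeartbeats 1000000


open MeasureTheory ProbabilityTheory Finset

/-- The Pell numbers `P_m = ((1+√2)^m - (1-√2)^m)/(2√2)` (as real numbers). -/
noncomputable def Pell (k : ℕ) : ℝ :=
  ((1 + Real.sqrt 2) ^ k - (1 - Real.sqrt 2) ^ k) / (2 * Real.sqrt 2)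

/-- The Pell–Lucas numbers `Q_m = (1+√2)^m + (1-√2)^m` (as real numbers). -/
noncomputable def PellLucas (k : ℕ) : ℝ :=
  (1 + Real.sqrt 2) ^ k + (1 - Real.sqrt 2) ^ k

private lemma sum_even_aux (n : ℕ) (g : ℕ → ℝ) (hg : ∀ k, Odd k → g k = 0) :
    ∑ k ∈ Finset.range (2 * n + 1), g k = ∑ j ∈ Finset.range (n + 1), g (2 * j) := by
  induction n with
  | zero => simp
  | succ m ih =>
    rw [show 2 * (m + 1) + 1 = (2 * m + 1) + 1 + 1 by ring, Finset.sum_range_succ,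
      Finset.sum_range_succ, ih, Finset.sum_range_succ, hg (2 * m + 1) ⟨m, by ring⟩,
      show 2 * m + 1 + 1 = 2 * (m + 1) by ring, Finset.sum_range_succ _ (m + 1), Finset.sum_range_succ _ m]
    ring

private lemma key_sum (n : ℕ) (x y : ℝ) :
    2 * ∑ j ∈ Finset.range (n + 1),
        ((2 * n).choose (2 * j) : ℝ) * x ^ (2 * j) * y ^ (2 * (n - j)) =
      (x + y) ^ (2 * n) + (y - x) ^ (2 * n) := by
  have h1 := add_pow x y (2 * n)
  have h2 := add_pow (-x) y (2 * n)
  rw [show -x + y = y - x by ring] at h2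
  rw [h1, h2, ← Finset.sum_add_distrib]
  have := sum_even_aux n (fun k =>
      (x ^ k * y ^ (2 * n - k) * ((2 * n).choose k : ℝ)) +
      ((-x) ^ k * y ^ (2 * n - k) * ((2 * n).choose k : ℝ)))
    (by
      intro k hk
      have hx : (-x) ^ k = -(x ^ k) := hk.neg_pow x
      simp only [hx]; ring)
  rw [this]
  rw [Finset.mul_sum]
  refine Finset.sum_congr rfl fun j hj => ?_
  have hj' : j ≤ n := Nat.lt_succ_iff.mp (Finset.mem_range.mp hj)
  have hsub : 2 * n - 2 * j = 2 * (n - j) := by omega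
  have hx : (-x) ^ (2 * j) = x ^ (2 * j) := by
    rw [neg_pow, Even.neg_one_pow ⟨j, by ring⟩, one_mul]
  rw [hsub, hx]
  ring

/-- `2^(n-1) P_(2n) = ∑_{j=0}^{n} C(2n,2j) P_(2j)` and
`2^(2n-1) P_(2n) = ∑_{j=0}^{n} C(2n,2j) P_(2j) Q_(2(n-j))`. -/
theorem stmt_18 (n : ℕ) (hn : 1 ≤ n) :
    ((2 : ℝ) ^ ((n : ℤ) - 1) * Pell (2 * n) =
        ∑ j ∈ Finset.range (n + 1), ((2 * n).choose (2 * j) : ℝ) * Pell (2 * j)) ∧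
      (2 : ℝ) ^ (2 * (n : ℤ) - 1) * Pell (2 * n) =
        ∑ j ∈ Finset.range (n + 1),
          ((2 * n).choose (2 * j) : ℝ) * Pell (2 * j) * PellLucas (2 * (n - j)) := by
  obtain ⟨m, rfl⟩ : ∃ m, n = m + 1 := ⟨n - 1, by omega⟩
  set s : ℝ := Real.sqrt 2 with hs
  have hs2 : s ^ 2 = 2 := Real.sq_sqrt (by norm_num)
  have hspos : (0 : ℝ) < s := Real.sqrt_pos.mpr (by norm_num)
  have hsne : s ≠ 0 := ne_of_gt hspos
  set α : ℝ := 1 + s with hα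
  set β : ℝ := 1 - s with hβ
  set n : ℕ := m + 1 with hn'
  -- zpow simplification
  have hz1 : (2 : ℝ) ^ ((n : ℤ) - 1) = 2 ^ m := by
    rw [show ((n : ℤ) - 1) = (m : ℤ) by push_cast [hn']; ring, zpow_natCast]
  have hz2 : (2 : ℝ) ^ (2 * (n : ℤ) - 1) = 2 ^ (2 * m + 1) := by
    rw [show (2 * (n : ℤ) - 1) = ((2 * m + 1 : ℕ) : ℤ) by push_cast [hn']; ring,
      zpow_natCast]
  -- powers of s
  have hsn : ∀ k : ℕ, s ^ (2 * k) = 2 ^ k := by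
    intro k; rw [pow_mul, hs2]
  -- key sums
  have hA := key_sum n α 1
  have hB := key_sum n β 1
  have h0 := key_sum n 1 1
  have hS1 := key_sum n α β
  have hS2 := key_sum n β α
  simp only [one_pow, mul_one] at hA hB h0
  have hA' : (α + 1) ^ (2 * n) + (1 - α) ^ (2 * n) = 2 ^ n * α ^ (2 * n) + 2 ^ n := by
    have e1 : α + 1 = s * α := by rw [hα]; nlinarith [hs2]
    have e2 : (1 - α) ^ (2 * n) = s ^ (2 * n) := by
      rw [hα, show 1 - (1 + s) = -s by ring, neg_pow,
        Even.neg_one_pow ⟨n, by ring⟩, one_mul]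
    rw [e1, mul_pow, hsn, e2, hsn]
  have hB' : (β + 1) ^ (2 * n) + (1 - β) ^ (2 * n) = 2 ^ n * β ^ (2 * n) + 2 ^ n := by
    have e1 : β + 1 = (-s) * β := by rw [hβ]; nlinarith [hs2]
    have e2 : (1 - β) ^ (2 * n) = s ^ (2 * n) := by
      rw [show (1 : ℝ) - β = s by rw [hβ]; ring]
    rw [e1, mul_pow, e2, hsn, neg_pow, Even.neg_one_pow ⟨n, by ring⟩, one_mul, hsn]
  rw [hA'] at hA
  rw [hB'] at hB
  -- part (a)
  have hsum_a : ∑ j ∈ Finset.range (n + 1),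
      ((2 * n).choose (2 * j) : ℝ) * (α ^ (2 * j) - β ^ (2 * j)) =
      2 ^ m * (α ^ (2 * n) - β ^ (2 * n)) := by
    have hd : ∑ j ∈ Finset.range (n + 1),
        ((2 * n).choose (2 * j) : ℝ) * (α ^ (2 * j) - β ^ (2 * j)) =
        (∑ j ∈ Finset.range (n + 1), ((2 * n).choose (2 * j) : ℝ) * α ^ (2 * j)) -
        (∑ j ∈ Finset.range (n + 1), ((2 * n).choose (2 * j) : ℝ) * β ^ (2 * j)) := by
      rw [← Finset.sum_sub_distrib]
      exact Finset.sum_congr rfl fun j _ => by ring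
    have hp : (2 : ℝ) ^ n = 2 * 2 ^ m := by rw [hn', pow_succ]; ring
    rw [hd]
    linear_combination (hA - hB) / 2 + (α ^ (2 * n) - β ^ (2 * n)) / 2 * hp
  have parta : (2 : ℝ) ^ ((n : ℤ) - 1) * Pell (2 * n) =
      ∑ j ∈ Finset.range (n + 1), ((2 * n).choose (2 * j) : ℝ) * Pell (2 * j) := by
    rw [hz1]
    simp only [Pell, ← hs, ← hα]
    have hβ' : ∀ k : ℕ, (1 - s) ^ k = β ^ k := fun k => by rw [hβ]
    simp only [hβ']
    rw [show ∀ X : ℝ, (∑ j ∈ Finset.range (n + 1),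
        ((2 * n).choose (2 * j) : ℝ) * ((α ^ (2 * j) - β ^ (2 * j)) / X)) =
        (∑ j ∈ Finset.range (n + 1),
        ((2 * n).choose (2 * j) : ℝ) * (α ^ (2 * j) - β ^ (2 * j))) / X from
      fun X => by rw [Finset.sum_div]; exact Finset.sum_congr rfl fun j _ => by ring,
      hsum_a]
    ring
  refine ⟨parta, ?_⟩
  -- part (b)
  -- S1 = S2
  have hαβ : α + β = 2 := by rw [hα, hβ]; ring
  have hβα : β - α = -(2 * s) := by rw [hα, hβ]; ring
  have hαβ' : α - β = 2 * s := by rw [hα, hβ]; ring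
  have h8 : (2 * s) ^ (2 * n) = 8 ^ n := by
    rw [pow_mul, show (2 * s) ^ 2 = 8 by nlinarith [hs2]]
  have hS1' : (α + β) ^ (2 * n) + (β - α) ^ (2 * n) =
      2 ^ (2 * n) + 8 ^ n := by
    rw [hαβ, hβα, neg_pow, Even.neg_one_pow ⟨n, by ring⟩, one_mul, h8]
  have hS2' : (β + α) ^ (2 * n) + (α - β) ^ (2 * n) =
      2 ^ (2 * n) + 8 ^ n := by
    rw [add_comm β α, hαβ, hαβ', h8]
  rw [hS1'] at hS1
  rw [hS2'] at hS2
  have hS12 : ∑ j ∈ Finset.range (n + 1),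
      ((2 * n).choose (2 * j) : ℝ) * α ^ (2 * j) * β ^ (2 * (n - j)) =
      ∑ j ∈ Finset.range (n + 1),
      ((2 * n).choose (2 * j) : ℝ) * β ^ (2 * j) * α ^ (2 * (n - j)) := by
    linarith [hS1, hS2]
  -- S0
  have h0' : ((1 : ℝ) + 1) ^ (2 * n) + (1 - 1) ^ (2 * n) = 2 * 2 ^ (2 * m + 1) := by
    rw [show (1 : ℝ) + 1 = 2 by norm_num, show (1 : ℝ) - 1 = 0 by norm_num,
      zero_pow (by omega), add_zero, ← pow_succ', hn']
    ring_nf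
  rw [h0'] at h0
  have hS0 : ∑ j ∈ Finset.range (n + 1), ((2 * n).choose (2 * j) : ℝ) =
      2 ^ (2 * m + 1) := by linarith [h0]
  rw [hz2]
  simp only [Pell, PellLucas, ← hs, ← hα]
  have hβ' : ∀ k : ℕ, (1 - s) ^ k = β ^ k := fun k => by rw [hβ]
  simp only [hβ']
  have hterm : ∀ j ∈ Finset.range (n + 1),
      ((2 * n).choose (2 * j) : ℝ) * ((α ^ (2 * j) - β ^ (2 * j)) / (2 * s)) *
        (α ^ (2 * (n - j)) + β ^ (2 * (n - j))) =
      (((2 * n).choose (2 * j) : ℝ) * α ^ (2 * n)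
        + ((2 * n).choose (2 * j) : ℝ) * α ^ (2 * j) * β ^ (2 * (n - j))
        - ((2 * n).choose (2 * j) : ℝ) * β ^ (2 * j) * α ^ (2 * (n - j))
        - ((2 * n).choose (2 * j) : ℝ) * β ^ (2 * n)) / (2 * s) := by
    intro j hj
    have hj' : j ≤ n := Nat.lt_succ_iff.mp (Finset.mem_range.mp hj)
    have hαn : α ^ (2 * j) * α ^ (2 * (n - j)) = α ^ (2 * n) := by
      rw [← pow_add]; congr 1; omega
    have hβn : β ^ (2 * j) * β ^ (2 * (n - j)) = β ^ (2 * n) := by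
      rw [← pow_add]; congr 1; omega
    rw [← hαn, ← hβn]; ring
  rw [Finset.sum_congr rfl hterm, ← Finset.sum_div]
  rw [show ∑ j ∈ Finset.range (n + 1),
      (((2 * n).choose (2 * j) : ℝ) * α ^ (2 * n)
        + ((2 * n).choose (2 * j) : ℝ) * α ^ (2 * j) * β ^ (2 * (n - j))
        - ((2 * n).choose (2 * j) : ℝ) * β ^ (2 * j) * α ^ (2 * (n - j))
        - ((2 * n).choose (2 * j) : ℝ) * β ^ (2 * n)) =
      (∑ j ∈ Finset.range (n + 1), ((2 * n).choose (2 * j) : ℝ)) * α ^ (2 * n)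
      + (∑ j ∈ Finset.range (n + 1),
          ((2 * n).choose (2 * j) : ℝ) * α ^ (2 * j) * β ^ (2 * (n - j)))
      - (∑ j ∈ Finset.range (n + 1),
          ((2 * n).choose (2 * j) : ℝ) * β ^ (2 * j) * α ^ (2 * (n - j)))
      - (∑ j ∈ Finset.range (n + 1), ((2 * n).choose (2 * j) : ℝ)) * β ^ (2 * n) from by
    simp only [Finset.sum_mul, ← Finset.sum_sub_distrib, ← Finset.sum_add_distrib]]
  rw [hS12, hS0]
  ring
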